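/- Let A be a prime noetherian ring and x a nonzero, non-unit, normal element of A such that xA is a completely prime ideal. If the localisation A_x of A at the powers of x is a noetherian unique factorisation ring, then so is A. -/

import Mathlib

/-- A ring is prime if `aRb = 0` implies `a = 0` or `b = 0`. -/
def IsPrimeRing (A : Type*) [Ring A] : Prop :=
  ∀ a b : A, (∀ r : A, a * r * b = 0) → a = 0 ∨ b = 0

/-- An element `x` is normal if `xA = Ax`. -/
def IsNormalElem {A : Type*} [Ring A] (x : A) : Prop :=
  {y | ∃ a, y = x * a} = {y | ∃ a, y = a * x}

/-- A two-sided ideal is prime. -/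
def TwoSidedIdeal.IsPrimeTS {A : Type*} [Ring A] (P : TwoSidedIdeal A) : Prop :=
  P ≠ ⊤ ∧ ∀ a b : A, (∀ r : A, a * r * b ∈ P) → a ∈ P ∨ b ∈ P

/-- A two-sided ideal is completely prime (the quotient is a domain). -/
def TwoSidedIdeal.IsCompletelyPrime {A : Type*} [Ring A] (P : TwoSidedIdeal A) : Prop :=
  P ≠ ⊤ ∧ ∀ a b : A, a * b ∈ P → a ∈ P ∨ b ∈ P

/-- A two-sided ideal is principal if it is generated by a normal element:
`I = xA = Ax` for some normal `x`. -/
def TwoSidedIdeal.IsPrincipalNormal {A : Type*} [Ring A] (I : TwoSidedIdeal A) : Prop :=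
  ∃ x : A, IsNormalElem x ∧ (∀ y, y ∈ I ↔ ∃ a, y = x * a)

/-- A noetherian unique factorisation ring: a prime noetherian ring in which every
nonzero prime ideal contains a nonzero principal prime ideal. -/
def IsNoethUFR (A : Type*) [Ring A] : Prop :=
  IsPrimeRing A ∧ IsNoetherianRing A ∧
    ∀ P : TwoSidedIdeal A, P.IsPrimeTS → P ≠ ⊥ →
      ∃ Q : TwoSidedIdeal A, Q ≠ ⊥ ∧ Q.IsPrimeTS ∧ Q.IsPrincipalNormal ∧ Q ≤ P

/-- A prime ideal of height one. -/
def TwoSidedIdeal.IsHeightOnePrime {A : Type*} [Ring A] (P : TwoSidedIdeal A) : Prop :=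
  P.IsPrimeTS ∧ P ≠ ⊥ ∧ ∀ Q : TwoSidedIdeal A, Q.IsPrimeTS → Q < P → Q = ⊥

/-- A noetherian unique factorisation domain: a noetherian UFR which is a domain and in
which every height one prime ideal is completely prime. -/
def IsNoethUFD (A : Type*) [Ring A] : Prop :=
  IsNoethUFR A ∧ IsDomain A ∧
    ∀ P : TwoSidedIdeal A, P.IsHeightOnePrime → P.IsCompletelyPrime

namespace NagataAux

variable {A : Type*} [Ring A]

lemma normal_right {x : A} (hxn : IsNormalElem x) (a : A) : ∃ b, a * x = x * b :=
  (Set.ext_iff.mp hxn (a * x)).mpr ⟨a, rfl⟩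

lemma normal_left {x : A} (hxn : IsNormalElem x) (a : A) : ∃ b, x * a = b * x :=
  (Set.ext_iff.mp hxn (x * a)).mp ⟨a, rfl⟩

lemma conj_pow_right {x : A} (hxn : IsNormalElem x) (a : A) (n : ℕ) :
    ∃ b, x ^ n * a = b * x ^ n := by
  induction n generalizing a with
  | zero => exact ⟨a, by simp⟩
  | succ n ih =>
    obtain ⟨b, hb⟩ := ih a
    obtain ⟨b', hb'⟩ := normal_left hxn b
    refine ⟨b', ?_⟩
    rw [pow_succ', mul_assoc, hb, ← mul_assoc, hb', mul_assoc]

lemma conj_pow_left {x : A} (hxn : IsNormalElem x) (a : A) (n : ℕ) :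
    ∃ b, a * x ^ n = x ^ n * b := by
  induction n generalizing a with
  | zero => exact ⟨a, by simp⟩
  | succ n ih =>
    obtain ⟨b, hb⟩ := normal_right hxn a
    obtain ⟨b', hb'⟩ := ih b
    exact ⟨b', by rw [pow_succ', ← mul_assoc, hb, mul_assoc, hb', ← mul_assoc, ← pow_succ']⟩

lemma normal_reg_left {B : Type*} [Ring B] (hB : IsPrimeRing B) {u : B}
    (hun : IsNormalElem u) (hu0 : u ≠ 0) {t : B} (h : u * t = 0) : t = 0 := by
  refine (hB u t fun r => ?_).resolve_left hu0
  obtain ⟨s, hs⟩ := normal_left hun r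
  rw [hs, mul_assoc, h, mul_zero]

lemma normal_reg_right {B : Type*} [Ring B] (hB : IsPrimeRing B) {u : B}
    (hun : IsNormalElem u) (hu0 : u ≠ 0) {t : B} (h : t * u = 0) : t = 0 := by
  refine (hB t u fun r => ?_).resolve_right hu0
  obtain ⟨s, hs⟩ := normal_right hun r
  rw [mul_assoc, hs, ← mul_assoc, h, zero_mul]

section X

variable {x : A} (hPrime : IsPrimeRing A) (hx0 : x ≠ 0) (hxn : IsNormalElem x)

include hPrime hx0 hxn

lemma xreg_l {t : A} (h : x * t = 0) : t = 0 := normal_reg_left hPrime hxn hx0 h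

lemma xreg_r {t : A} (h : t * x = 0) : t = 0 := normal_reg_right hPrime hxn hx0 h

lemma xpowreg_l {n : ℕ} {t : A} (h : x ^ n * t = 0) : t = 0 := by
  induction n generalizing t with
  | zero => simpa using h
  | succ n ih =>
    rw [pow_succ', mul_assoc] at h
    exact ih (xreg_l hPrime hx0 hxn h)

lemma xpowreg_r {n : ℕ} {t : A} (h : t * x ^ n = 0) : t = 0 := by
  induction n generalizing t with
  | zero => simpa using h
  | succ n ih =>
    rw [pow_succ, ← mul_assoc] at h
    exact ih (xreg_r hPrime hx0 hxn h)

lemma unit_of_right_inv {b : A} (h : x * b = 1) : IsUnit x := by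
  have h2 : x * (b * x - 1) = 0 := by
    rw [mul_sub, mul_one, ← mul_assoc, h, one_mul, sub_self]
  have h3 : b * x = 1 := by
    have := xreg_l hPrime hx0 hxn h2
    exact sub_eq_zero.mp this
  exact ⟨⟨x, b, h, h3⟩, rfl⟩

lemma unit_of_left_inv {b : A} (h : b * x = 1) : IsUnit x := by
  have h2 : (x * b - 1) * x = 0 := by
    rw [sub_mul, one_mul, mul_assoc, h, mul_one, sub_self]
  have h3 : x * b = 1 := by
    have := xreg_r hPrime hx0 hxn h2
    exact sub_eq_zero.mp this
  exact ⟨⟨x, b, h3, h⟩, rfl⟩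

end X

lemma mem_span_normal {x : A} (hxn : IsNormalElem x) (y : A) :
    y ∈ TwoSidedIdeal.span {x} ↔ ∃ a, y = x * a := by
  have hxx : x ∈ ({y | ∃ a, y = x * a} : Set A) := ⟨1, (mul_one x).symm⟩
  let I : TwoSidedIdeal A := TwoSidedIdeal.mk' {y | ∃ a, y = x * a}
    ⟨0, (mul_zero x).symm⟩
    (fun ⟨a, ha⟩ ⟨b, hb⟩ => ⟨a + b, by rw [ha, hb, mul_add]⟩)
    (fun ⟨a, ha⟩ => ⟨-a, by rw [ha, mul_neg]⟩)
    (fun {z y} ⟨a, ha⟩ => by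
      obtain ⟨b, hb⟩ := normal_right hxn z
      exact ⟨b * a, by rw [ha, ← mul_assoc, hb, mul_assoc]⟩)
    (fun {y z} ⟨a, ha⟩ => ⟨a * z, by rw [ha, mul_assoc]⟩)
  constructor
  · intro hy
    have : ({x} : Set A) ⊆ I := by
      intro z hz
      rw [Set.mem_singleton_iff] at hz
      rw [hz]
      exact (TwoSidedIdeal.mem_mk' _ _ _ _ _ _ x).mpr hxx
    have := TwoSidedIdeal.mem_span_iff.mp hy I this
    exact (TwoSidedIdeal.mem_mk' _ _ _ _ _ _ y).mp this
  · rintro ⟨a, rfl⟩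
    exact TwoSidedIdeal.mul_mem_right _ _ _ (TwoSidedIdeal.subset_span rfl)

section P

variable {x : A} (hxn : IsNormalElem x) {P : TwoSidedIdeal A}
  (hP : P.IsPrimeTS) (hxP : x ∉ P)

include hxn hP hxP

lemma strip_left {t : A} (h : x * t ∈ P) : t ∈ P := by
  refine (hP.2 x t fun r => ?_).resolve_left hxP
  obtain ⟨s, hs⟩ := normal_left hxn r
  rw [hs, mul_assoc]
  exact P.mul_mem_left _ _ h

lemma strip_right {t : A} (h : t * x ∈ P) : t ∈ P := by
  refine (hP.2 t x fun r => ?_).resolve_right hxP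
  obtain ⟨s, hs⟩ := normal_right hxn r
  rw [mul_assoc, hs, ← mul_assoc]
  exact P.mul_mem_right _ _ h

lemma strip_left_pow {n : ℕ} {t : A} (h : x ^ n * t ∈ P) : t ∈ P := by
  induction n generalizing t with
  | zero => simpa using h
  | succ n ih =>
    rw [pow_succ', mul_assoc] at h
    exact ih (strip_left hxn hP hxP h)

lemma strip_right_pow {n : ℕ} {t : A} (h : t * x ^ n ∈ P) : t ∈ P := by
  induction n generalizing t with
  | zero => simpa using h
  | succ n ih =>
    rw [pow_succ, ← mul_assoc] at h
    exact ih (strip_right hxn hP hxP h)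

end P

section Loc

open OreLocalization

variable {x : A} [OreSet (Submonoid.powers x)]

local notation "Ax" => OreLocalization (Submonoid.powers x) A
local notation "φ" => (numeratorRingHom : A →+* OreLocalization (Submonoid.powers x) A)

lemma phi_apply (r : A) : (φ r : Ax) = r /ₒ 1 := by with_unfolding_all rfl

lemma phi_x_unit : IsUnit (φ x : Ax) := by
  have := numerator_isUnit (⟨x, Submonoid.mem_powers x⟩ : Submonoid.powers x)
  rwa [numeratorHom_apply, ← phi_apply] at this

variable (hPrime : IsPrimeRing A) (hx0 : x ≠ 0) (hxn : IsNormalElem x)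

include hPrime hx0 hxn

lemma phi_inj : Function.Injective (φ : A → Ax) := by
  have h : Submonoid.powers x ≤ nonZeroDivisorsLeft A := by
    intro s hs
    obtain ⟨n, rfl⟩ := (Submonoid.mem_powers_iff s x).mp hs
    exact fun y hy => xpowreg_l hPrime hx0 hxn hy
  intro a b hab
  exact numeratorHom_inj h hab

omit hPrime hx0 hxn in
lemma phi_pow (n : ℕ) : ((φ x : Ax)) ^ n = φ (x ^ n) := by
  rw [map_pow]

omit hPrime hx0 hxn in
lemma pow_inverse (m : ℕ) : ∃ z : Ax, z * (φ x) ^ m = 1 ∧ (φ x) ^ m * z = 1 := by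
  obtain ⟨w, hw⟩ := (phi_x_unit (x := x)).pow m
  exact ⟨↑w⁻¹, by rw [← hw, Units.inv_mul], by rw [← hw, Units.mul_inv]⟩

omit hPrime hx0 hxn in
lemma mul_frac (r : A) (s : Submonoid.powers x) {n : ℕ} (hs : x ^ n = (s : A)) :
    ((φ x : Ax)) ^ n * (r /ₒ s) = φ r := by
  rw [phi_pow, phi_apply, phi_apply,
    oreDiv_mul_char (x ^ n) r 1 s 1 1 (by simpa using hs), one_mul, mul_one]

omit hPrime hx0 hxn in
lemma frac_left (y : Ax) : ∃ (e : A) (m : ℕ), (φ x : Ax) ^ m * y = φ e := by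
  induction y using OreLocalization.ind with
  | _ r s =>
    obtain ⟨m, hm⟩ := (Submonoid.mem_powers_iff (s : A) x).mp s.2
    exact ⟨r, m, mul_frac r s hm⟩

omit hPrime hx0 in
lemma frac_right (y : Ax) : ∃ (r : A) (n : ℕ), y * (φ x : Ax) ^ n = φ r := by
  obtain ⟨e, m, hm⟩ := frac_left (x := x) y
  obtain ⟨b, hb⟩ := conj_pow_left hxn e m
  obtain ⟨z, hz1, hz2⟩ := pow_inverse (x := x) m
  refine ⟨b, m, ?_⟩
  have hphib : (φ e : Ax) * (φ x) ^ m = (φ x) ^ m * φ b := by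
    rw [phi_pow, ← map_mul, ← map_mul, hb]
  have hy : y = z * φ e := by
    rw [← hm, ← mul_assoc, hz1, one_mul]
  rw [hy, mul_assoc, hphib, ← mul_assoc, hz1, one_mul]

omit hPrime hx0 hxn in
lemma comm_pow_phi (hxn : IsNormalElem x) (p : A) (m : ℕ) :
    ∃ p', ((φ p : Ax)) * (φ x) ^ m = (φ x) ^ m * φ p' ∧ p * x ^ m = x ^ m * p' := by
  obtain ⟨p', hp'⟩ := conj_pow_left hxn p m
  exact ⟨p', by rw [phi_pow, ← map_mul, ← map_mul, hp'], hp'⟩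

variable {P : TwoSidedIdeal A} (hP : P.IsPrimeTS) (hxP : x ∉ P)

include hP hxP

omit hPrime hx0 in
lemma ext_ideal :
    ∃ E : TwoSidedIdeal Ax,
      ∀ y : Ax, y ∈ E ↔ ∃ (n : ℕ) (p : A), p ∈ P ∧ y * (φ x : Ax) ^ n = φ p := by
  refine ⟨TwoSidedIdeal.mk'
    {y : Ax | ∃ (n : ℕ) (p : A), p ∈ P ∧ y * (φ x : Ax) ^ n = φ p}
    ⟨0, 0, P.zero_mem, by simp⟩ ?_ ?_ ?_ ?_,
    fun y => TwoSidedIdeal.mem_mk' _ _ _ _ _ _ y⟩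
  · rintro y₁ y₂ ⟨n₁, p₁, hp₁, h₁⟩ ⟨n₂, p₂, hp₂, h₂⟩
    refine ⟨n₁ + n₂, p₁ * x ^ n₂ + p₂ * x ^ n₁,
      P.add_mem (P.mul_mem_right _ _ hp₁) (P.mul_mem_right _ _ hp₂), ?_⟩
    have e1 : y₁ * (φ x : Ax) ^ (n₁ + n₂) = φ (p₁ * x ^ n₂) := by
      rw [pow_add, ← mul_assoc, h₁, map_mul, phi_pow]
    have e2 : y₂ * (φ x : Ax) ^ (n₁ + n₂) = φ (p₂ * x ^ n₁) := by
      rw [add_comm n₁ n₂, pow_add, ← mul_assoc, h₂, map_mul, phi_pow]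
    rw [add_mul, e1, e2, map_add]
  · rintro y ⟨n, p, hp, h⟩
    exact ⟨n, -p, P.neg_mem hp, by rw [neg_mul, h, map_neg]⟩
  · rintro z y ⟨n, p, hp, h⟩
    obtain ⟨r, m, hr⟩ := frac_right hxn z
    obtain ⟨p', hc, hc'⟩ := comm_pow_phi hxn p m
    have hp' : p' ∈ P := strip_left_pow hxn hP hxP (by rw [← hc']; exact P.mul_mem_right _ _ hp)
    refine ⟨n + m, r * p', P.mul_mem_left _ _ hp', ?_⟩
    calc z * y * (φ x : Ax) ^ (n + m) = z * (y * (φ x) ^ n) * (φ x) ^ m := by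
          rw [pow_add, mul_assoc, mul_assoc, mul_assoc]
      _ = z * ((φ p : Ax) * (φ x) ^ m) := by rw [h, mul_assoc]
      _ = z * (φ x : Ax) ^ m * φ p' := by rw [hc, mul_assoc]
      _ = φ (r * p') := by rw [hr, ← map_mul]
  · rintro y z ⟨n, p, hp, h⟩
    obtain ⟨r, m, hr⟩ := frac_right hxn z
    obtain ⟨r', hc, hc'⟩ := comm_pow_phi hxn r n
    refine ⟨m + n, p * r', P.mul_mem_right _ _ hp, ?_⟩
    calc y * z * (φ x : Ax) ^ (m + n) = y * (z * (φ x) ^ m) * (φ x) ^ n := by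
          rw [pow_add, mul_assoc, mul_assoc, mul_assoc]
      _ = y * ((φ r : Ax) * (φ x) ^ n) := by rw [hr, mul_assoc]
      _ = y * (φ x : Ax) ^ n * φ r' := by rw [hc, mul_assoc]
      _ = φ (p * r') := by rw [h, ← map_mul]

variable {E : TwoSidedIdeal (OreLocalization (Submonoid.powers x) A)}
  (hE : ∀ y : OreLocalization (Submonoid.powers x) A,
    y ∈ E ↔ ∃ (n : ℕ) (p : A), p ∈ P ∧
      y * (numeratorRingHom x : OreLocalization (Submonoid.powers x) A) ^ n = numeratorRingHom p)

include hE

lemma ext_contract (a : A) : (φ a : Ax) ∈ E ↔ a ∈ P := by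
  rw [hE]
  constructor
  · rintro ⟨n, p, hp, h⟩
    rw [phi_pow, ← map_mul] at h
    have : a * x ^ n = p := phi_inj hPrime hx0 hxn h
    exact strip_right_pow hxn hP hxP (this ▸ hp)
  · intro ha
    exact ⟨0, a, ha, by simp⟩

lemma ext_ne_bot (hPbot : P ≠ ⊥) : E ≠ ⊥ := by
  have : ∃ p ∈ P, p ≠ (0 : A) := by
    by_contra hcon
    push_neg at hcon
    refine hPbot (le_antisymm (fun p hp => ?_) bot_le)
    rw [TwoSidedIdeal.mem_bot]
    exact hcon p hp
  obtain ⟨p, hp, hp0⟩ := this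
  intro hbot
  have hmem : (φ p : Ax) ∈ E := (hE _).mpr ⟨0, p, hp, by simp⟩
  rw [hbot, TwoSidedIdeal.mem_bot] at hmem
  exact hp0 (phi_inj hPrime hx0 hxn (by rw [hmem, map_zero]))

lemma ext_prime : E.IsPrimeTS := by
  constructor
  · intro htop
    have h1 : (1 : Ax) ∈ E := htop ▸ TwoSidedIdeal.mem_top _
    obtain ⟨n, p, hp, h⟩ := (hE 1).mp h1
    rw [one_mul, phi_pow] at h
    have : x ^ n = p := phi_inj hPrime hx0 hxn h
    have hone : (1 : A) ∈ P := strip_left_pow hxn hP hxP (t := 1) (by rw [mul_one, this]; exact hp)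
    exact hP.1 (TwoSidedIdeal.eq_top P hone)
  · intro a b H
    obtain ⟨a₀, n, ha⟩ := frac_right hxn a
    obtain ⟨b₀, m, hb⟩ := frac_left (x := x) b
    obtain ⟨z, hz1, hz2⟩ := pow_inverse (x := x) m
    have key : ∀ t : A, a₀ * t * b₀ ∈ P := by
      intro t
      have := H ((φ x : Ax) ^ n * φ t * (φ x) ^ m)
      have heq : a * ((φ x : Ax) ^ n * φ t * (φ x) ^ m) * b = φ (a₀ * t * b₀) := by
        calc a * ((φ x : Ax) ^ n * φ t * (φ x) ^ m) * b
            = (a * (φ x) ^ n) * φ t * ((φ x) ^ m * b) := by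
              simp only [mul_assoc]
        _ = (φ a₀ : Ax) * φ t * φ b₀ := by rw [ha, hb]
        _ = φ (a₀ * t * b₀) := by rw [← map_mul, ← map_mul]
      rw [heq] at this
      exact (ext_contract hPrime hx0 hxn hP hxP hE _).mp this
    rcases hP.2 a₀ b₀ key with h0 | h0
    · exact Or.inl ((hE a).mpr ⟨n, a₀, h0, ha⟩)
    · refine Or.inr ?_
      obtain ⟨b₁, hc, hc'⟩ := comm_pow_phi hxn b₀ m
      have hb₁ : b₁ ∈ P := strip_left_pow hxn hP hxP (by rw [← hc']; exact P.mul_mem_right _ _ h0)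
      refine (hE b).mpr ⟨m, b₁, hb₁, ?_⟩
      have hbz : b = z * φ b₀ := by rw [← hb, ← mul_assoc, hz1, one_mul]
      rw [hbz, mul_assoc, hc, ← mul_assoc, hz1, one_mul]

end Loc

section Tau

variable {x : A} (hNoeth : IsNoetherianRing A) (hPrime : IsPrimeRing A)
  (hx0 : x ≠ 0) (hxn : IsNormalElem x)

include hNoeth hPrime hx0 hxn

lemma tau_one (T : Ideal A) (hTsat : ∀ β, β * x ∈ T → β ∈ T)
    (hTxr : ∀ β, β ∈ T → β * x ∈ T) {β t : A} (hβ : β ∈ T) (hβt : β * x = x * t) :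
    t ∈ T := by
  choose g hg using fun s => normal_right hxn s
  -- hg : ∀ s, s * x = x * g s
  set t' : ℕ → A := fun k => g^[k] β with ht'def
  have ht0 : t' 0 = β := rfl
  have htsucc : ∀ k, t' (k + 1) = g (t' k) := fun k => Function.iterate_succ_apply' g k β
  have ht : ∀ k, t' k * x = x * t' (k + 1) := by
    intro k; rw [htsucc]; exact hg _
  have hxk : ∀ k, x ^ k * t' k = β * x ^ k := by
    intro k
    induction k with
    | zero => simp [ht0]
    | succ k ihk => rw [pow_succ, mul_assoc, ← ht k, ← mul_assoc, ihk, mul_assoc]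
  have hxk1 : ∀ k, x ^ k * t' (k + 1) = t' 1 * x ^ k := by
    intro k
    induction k with
    | zero => simp
    | succ k ihk => rw [pow_succ, mul_assoc, ← ht (k+1), ← mul_assoc, ihk, mul_assoc]
  have hβxk : ∀ k, β * x ^ k ∈ T := by
    intro k
    induction k with
    | zero => simpa using hβ
    | succ k ihk =>
      rw [pow_succ, ← mul_assoc]
      exact hTxr _ ihk
  have hsmul : ∀ (k : ℕ) (r β' : A), x ^ k * β' ∈ T → x ^ k * (r * β') ∈ T := by
    intro k r β' hm
    obtain ⟨r', hr'⟩ := conj_pow_right hxn r k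
    rw [← mul_assoc, hr', mul_assoc]
    exact T.smul_mem r' hm
  let U : ℕ → Submodule A A := fun k =>
    { carrier := {β' | x ^ k * β' ∈ T}
      add_mem' := fun {p q} hp hq => by
        simp only [Set.mem_setOf_eq, mul_add] at *
        exact T.add_mem hp hq
      zero_mem' := by
        simp only [Set.mem_setOf_eq, mul_zero]
        exact T.zero_mem
      smul_mem' := fun r {β'} hm => by
        simp only [Set.mem_setOf_eq, smul_eq_mul] at *
        exact hsmul k r β' hm }
  have hUmem : ∀ (k : ℕ) (β' : A), β' ∈ U k ↔ x ^ k * β' ∈ T := fun k β' => Iff.rfl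
  have hUmono : Monotone U := by
    intro k l hkl
    induction hkl with
    | refl => exact le_refl _
    | @step m h ih =>
      refine le_trans ih (fun β' hm => ?_)
      rw [hUmem] at hm ⊢
      rw [pow_succ', mul_assoc]
      exact T.smul_mem x hm
  obtain ⟨N, hN⟩ := monotone_stabilizes_iff_noetherian.mpr hNoeth ⟨U, hUmono⟩
  have h1 : t' (N+1) ∈ U (N+1) := by
    rw [hUmem, hxk (N+1)]
    exact hβxk (N+1)
  have h2 : t' (N+1) ∈ U N := by
    have heq : U N = U (N+1) := hN (N+1) (Nat.le_succ N)
    rw [heq]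
    exact h1
  have h3 : t' 1 * x ^ N ∈ T := by
    rw [hUmem] at h2
    rwa [hxk1 N] at h2
  have hstrip : ∀ (k : ℕ) (γ : A), γ * x ^ k ∈ T → γ ∈ T := by
    intro k
    induction k with
    | zero => intro γ h; simpa using h
    | succ k ihk =>
      intro γ h
      rw [pow_succ, ← mul_assoc] at h
      exact ihk _ (hTsat _ h)
  have h4 : t' 1 ∈ T := hstrip N _ h3
  have h5 : β * x = x * t' 1 := by rw [← ht0, ht 0]
  have h6 : t = t' 1 := by
    have h7 : x * (t - t' 1) = 0 := by rw [mul_sub, ← hβt, ← h5, sub_self]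
    have := xreg_l hPrime hx0 hxn h7
    exact sub_eq_zero.mp this
  rw [h6]
  exact h4

lemma tau_chain (T : Ideal A) (hTsat : ∀ β, β * x ∈ T → β ∈ T)
    (hTxr : ∀ β, β ∈ T → β * x ∈ T) {b : A} (hb : b ∈ T) (m : ℕ) :
    ∃ t, b * x ^ m = x ^ m * t ∧ t ∈ T := by
  induction m with
  | zero => exact ⟨b, by simp, hb⟩
  | succ m ih =>
    obtain ⟨t, ht, htT⟩ := ih
    obtain ⟨t', ht'⟩ := normal_right hxn t
    refine ⟨t', ?_, tau_one hNoeth hPrime hx0 hxn T hTsat hTxr htT ht'⟩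
    rw [pow_succ, ← mul_assoc, ht, mul_assoc, ht', ← mul_assoc]

end Tau

section Main

open OreLocalization

variable {x : A} [OreSet (Submonoid.powers x)]

local notation "Ax" => OreLocalization (Submonoid.powers x) A
local notation "φ" => (numeratorRingHom : A →+* OreLocalization (Submonoid.powers x) A)

/-- The auxiliary "valid numerator" predicate. -/
def ValidAux (E : TwoSidedIdeal (OreLocalization (Submonoid.powers x) A)) (c : A) : Prop :=
  ∃ (Q : TwoSidedIdeal (OreLocalization (Submonoid.powers x) A))
    (u : OreLocalization (Submonoid.powers x) A) (n : ℕ),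
    Q ≠ ⊥ ∧ Q.IsPrimeTS ∧ Q ≤ E ∧ IsNormalElem u ∧ (∀ y, y ∈ Q ↔ ∃ a, y = u * a) ∧
    (numeratorRingHom c : OreLocalization (Submonoid.powers x) A) = u * (numeratorRingHom x) ^ n

variable (hPrime : IsPrimeRing A) (hx0 : x ≠ 0) (hxn : IsNormalElem x)

include hPrime hx0 hxn

omit hPrime hx0 hxn in
lemma mem_ne_zero_of_ne_bot {Q : TwoSidedIdeal (OreLocalization (Submonoid.powers x) A)}
    {u : Ax} (hQbot : Q ≠ ⊥) (humem : ∀ y, y ∈ Q ↔ ∃ a, y = u * a) : u ≠ 0 := by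
  intro h
  refine hQbot (le_antisymm (fun y hy => ?_) bot_le)
  obtain ⟨a, rfl⟩ := (humem y).mp hy
  rw [TwoSidedIdeal.mem_bot, h, zero_mul]

lemma valid_lann (hlp : IsPrimeRing (OreLocalization (Submonoid.powers x) A))
    {E : TwoSidedIdeal (OreLocalization (Submonoid.powers x) A)} {c : A}
    (hc : ValidAux E c) : c ≠ 0 ∧ ∀ t : A, t * c = 0 → t = 0 := by
  obtain ⟨Q, u, n, hQbot, hQprime, hQE, hun, humem, hcu⟩ := hc
  obtain ⟨zn, hzn1, hzn2⟩ := pow_inverse (x := x) n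
  have hu0 : u ≠ 0 := mem_ne_zero_of_ne_bot hQbot humem
  constructor
  · intro h
    rw [h, map_zero] at hcu
    refine hu0 ?_
    calc u = u * ((φ x : Ax) ^ n * zn) := by rw [hzn2, mul_one]
      _ = (u * (φ x : Ax) ^ n) * zn := by rw [mul_assoc]
      _ = 0 := by rw [← hcu, zero_mul]
  · intro t ht
    have h1 : (φ t : Ax) * (u * (φ x) ^ n) = 0 := by
      rw [← hcu, ← map_mul, ht, map_zero]
    have h2 : (φ t : Ax) * u = 0 := by
      calc (φ t : Ax) * u = (φ t) * (u * ((φ x : Ax)^n * zn)) := by rw [hzn2, mul_one]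
        _ = ((φ t : Ax) * (u * (φ x)^n)) * zn := by rw [← mul_assoc, ← mul_assoc, mul_assoc (φ t) u]
        _ = 0 := by rw [h1, zero_mul]
    have h3 : (φ t : Ax) = 0 := normal_reg_right hlp hun hu0 h2
    refine phi_inj hPrime hx0 hxn ?_
    rw [h3, map_zero]

variable {P : TwoSidedIdeal A} (hP : P.IsPrimeTS) (hxP : x ∉ P)
  {E : TwoSidedIdeal (OreLocalization (Submonoid.powers x) A)}
  (hE : ∀ y : OreLocalization (Submonoid.powers x) A,
    y ∈ E ↔ ∃ (n : ℕ) (p : A), p ∈ P ∧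
      y * (numeratorRingHom x : OreLocalization (Submonoid.powers x) A) ^ n = numeratorRingHom p)

include hP hxP hE

lemma valid_step {c c' : A} (hc : ValidAux E c) (hcc' : c = x * c') : ValidAux E c' := by
  obtain ⟨Q, u, n, hQbot, hQprime, hQE, hun, humem, hcu⟩ := hc
  obtain ⟨z1, hz11, hz12⟩ := pow_inverse (x := x) 1
  rw [pow_one] at hz11 hz12
  have hu0 : u ≠ 0 := mem_ne_zero_of_ne_bot hQbot humem
  have huQ : u ∈ Q := (humem u).mpr ⟨1, (mul_one u).symm⟩
  let Q' : TwoSidedIdeal (OreLocalization (Submonoid.powers x) A) := TwoSidedIdeal.mk'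
    {y : Ax | (φ x : Ax) * y ∈ Q}
    (by simp only [Set.mem_setOf_eq, mul_zero]; exact Q.zero_mem)
    (fun {p q} hp hq => by
      simp only [Set.mem_setOf_eq, mul_add] at *
      exact Q.add_mem hp hq)
    (fun {p} hp => by
      simp only [Set.mem_setOf_eq, mul_neg] at *
      exact Q.neg_mem hp)
    (fun {x₀ y} hy => by
      simp only [Set.mem_setOf_eq] at *
      have heq : (φ x : Ax) * (x₀ * y) = ((φ x) * x₀ * z1) * ((φ x) * y) := by
        rw [mul_assoc ((φ x : Ax) * x₀) z1, ← mul_assoc z1, hz11, one_mul, mul_assoc]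
      rw [heq]
      exact Q.mul_mem_left _ _ hy)
    (fun {y x₀} hy => by
      simp only [Set.mem_setOf_eq] at *
      rw [← mul_assoc]
      exact Q.mul_mem_right _ _ hy)
  have hQ'mem : ∀ y : Ax, y ∈ Q' ↔ (φ x : Ax) * y ∈ Q :=
    fun y => TwoSidedIdeal.mem_mk' _ _ _ _ _ _ y
  have hu'Q' : z1 * u ∈ Q' := by
    rw [hQ'mem, ← mul_assoc, hz12, one_mul]
    exact huQ
  have hu'0 : z1 * u ≠ 0 := by
    intro h
    refine hu0 ?_
    calc u = (φ x : Ax) * (z1 * u) := by rw [← mul_assoc, hz12, one_mul]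
      _ = 0 := by rw [h, mul_zero]
  refine ⟨Q', z1 * u, n, ?_, ⟨?_, ?_⟩, ?_, ?_, ?_, ?_⟩
  · intro h
    rw [h, TwoSidedIdeal.mem_bot] at hu'Q'
    exact hu'0 hu'Q'
  · -- Q' ≠ ⊤
    intro h
    have h1 : (1 : Ax) ∈ Q' := h ▸ TwoSidedIdeal.mem_top _
    rw [hQ'mem, mul_one] at h1
    have h2 : (φ x : Ax) ∈ E := hQE h1
    exact hxP ((ext_contract hPrime hx0 hxn hP hxP hE x).mp h2)
  · -- prime
    intro a b H
    have H' : ∀ s : Ax, ((φ x : Ax) * a) * s * b ∈ Q := by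
      intro s
      have h1 := (hQ'mem _).mp (H s)
      rwa [← mul_assoc, ← mul_assoc] at h1
    rcases hQprime.2 _ b H' with h | h
    · exact Or.inl ((hQ'mem a).mpr h)
    · exact Or.inr ((hQ'mem b).mpr (Q.mul_mem_left _ _ h))
  · -- Q' ≤ E
    intro y hy
    have h1 : (φ x : Ax) * y ∈ E := hQE ((hQ'mem y).mp hy)
    have h2 : y = z1 * ((φ x : Ax) * y) := by rw [← mul_assoc, hz11, one_mul]
    rw [h2]
    exact E.mul_mem_left _ _ h1
  · -- normality of z1 * u
    apply Set.ext
    intro y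
    constructor
    · rintro ⟨a, rfl⟩
      obtain ⟨s, hs⟩ := (Set.ext_iff.mp hun (u * a)).mp ⟨a, rfl⟩
      refine ⟨z1 * s * (φ x : Ax), ?_⟩
      calc z1 * u * a = z1 * (s * u) := by rw [mul_assoc, hs]
        _ = z1 * (s * ((φ x : Ax) * (z1 * u))) := by rw [← mul_assoc (φ x : Ax), hz12, one_mul]
        _ = z1 * s * (φ x : Ax) * (z1 * u) := by
            rw [mul_assoc (z1 * s), mul_assoc z1 s]
    · rintro ⟨a, rfl⟩
      obtain ⟨s, hs⟩ := (Set.ext_iff.mp hun (a * z1 * u)).mpr ⟨a * z1, rfl⟩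
      obtain ⟨g, hg⟩ := (Set.ext_iff.mp hun ((φ x : Ax) * u)).mpr ⟨φ x, rfl⟩
      refine ⟨g * s, ?_⟩
      calc a * (z1 * u) = u * s := by rw [← mul_assoc, hs]
        _ = z1 * ((φ x : Ax) * u) * s := by rw [← mul_assoc, hz11, one_mul]
        _ = z1 * (u * g) * s := by rw [hg]
        _ = z1 * u * (g * s) := by rw [mul_assoc z1 u, mul_assoc, mul_assoc]
  · -- membership characterization
    intro y
    rw [hQ'mem]
    constructor
    · intro hy
      obtain ⟨a, ha⟩ := (humem _).mp hy
      refine ⟨a, ?_⟩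
      calc y = z1 * ((φ x : Ax) * y) := by rw [← mul_assoc, hz11, one_mul]
        _ = z1 * (u * a) := by rw [ha]
        _ = z1 * u * a := by rw [mul_assoc]
    · rintro ⟨a, rfl⟩
      refine (humem _).mpr ⟨a, ?_⟩
      rw [← mul_assoc, ← mul_assoc, hz12, one_mul]
  · -- numerator equation
    have h1 : (φ c : Ax) = (φ x) * (φ c') := by rw [hcc', map_mul]
    calc (φ c' : Ax) = z1 * ((φ x : Ax) * (φ c')) := by rw [← mul_assoc, hz11, one_mul]
      _ = z1 * (φ c : Ax) := by rw [h1]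
      _ = z1 * (u * (φ x : Ax) ^ n) := by rw [hcu]
      _ = z1 * u * (φ x : Ax) ^ n := by rw [mul_assoc]

omit hE in
lemma hard_case (hNoeth : IsNoetherianRing A) (hxu : ¬ IsUnit x)
    (hxcp : (TwoSidedIdeal.span {x}).IsCompletelyPrime)
    (hloc : IsNoethUFR (OreLocalization (Submonoid.powers x) A))
    (hPbot : P ≠ ⊥) :
    ∃ Q : TwoSidedIdeal A, Q ≠ ⊥ ∧ Q.IsPrimeTS ∧ Q.IsPrincipalNormal ∧ Q ≤ P := by
  classical
  obtain ⟨E, hE⟩ := ext_ideal hxn hP hxP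
  obtain ⟨Q₀, hQ₀bot, hQ₀prime, hQ₀pn, hQ₀E⟩ :=
    hloc.2.2 E (ext_prime hPrime hx0 hxn hP hxP hE) (ext_ne_bot hPrime hx0 hxn hP hxP hE hPbot)
  obtain ⟨u₀, hu₀n, hu₀mem⟩ := hQ₀pn
  -- the family of valid numerators is nonempty
  have hval₀ : ∃ c, ValidAux E c := by
    obtain ⟨c, n, hc⟩ := frac_right hxn u₀
    exact ⟨c, Q₀, u₀, n, hQ₀bot, hQ₀prime, hQ₀E, hu₀n, hu₀mem, hc.symm⟩
  -- pick a maximal one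
  obtain ⟨I, ⟨c, hcval, hIc⟩, hImax⟩ := set_has_maximal_iff_noetherian.mpr hNoeth
    {I : Submodule A A | ∃ c, ValidAux E c ∧ I = Submodule.span A {c}}
    ⟨Submodule.span A {hval₀.choose}, hval₀.choose, hval₀.choose_spec, rfl⟩
  subst hIc
  have hcx : ∀ c', c ≠ x * c' := by
    intro c' hcc'
    have hv' : ValidAux E c' := valid_step hPrime hx0 hxn hP hxP hE hcval hcc'
    have hle : Submodule.span A {c} ≤ Submodule.span A {c'} := by
      rw [Submodule.span_le, Set.singleton_subset_iff]
      exact Submodule.mem_span_singleton.mpr ⟨x, by rw [smul_eq_mul, ← hcc']⟩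
    have heq : Submodule.span A {c} = Submodule.span A {c'} := by
      by_contra hne
      exact hImax _ ⟨c', hv', rfl⟩ (lt_of_le_of_ne hle hne)
    have hc' : c' ∈ Submodule.span A {c} := by
      rw [heq]
      exact Submodule.mem_span_singleton_self c'
    obtain ⟨b, hb⟩ := Submodule.mem_span_singleton.mp hc'
    rw [smul_eq_mul] at hb
    have h0 : (1 - b * x) * c' = 0 := by
      rw [sub_mul, one_mul, mul_assoc, ← hcc', hb, sub_self]
    have h1 : (1 : A) - b * x = 0 := (valid_lann hPrime hx0 hxn hloc.1 hv').2 _ h0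
    have hbx : b * x = 1 := (sub_eq_zero.mp h1).symm
    exact hxu (unit_of_left_inv hPrime hx0 hxn hbx)
  obtain ⟨hc0, -⟩ := valid_lann hPrime hx0 hxn hloc.1 hcval
  obtain ⟨Q, u, n, hQbot, hQprime, hQE, hun, humem, hcu⟩ := hcval
  obtain ⟨zn, hzn1, hzn2⟩ := pow_inverse (x := x) n
  have hu0 : u ≠ 0 := mem_ne_zero_of_ne_bot hQbot humem
  -- the contraction of Q
  let QA : TwoSidedIdeal A := TwoSidedIdeal.mk' {a : A | (φ a : Ax) ∈ Q}
    (by simp only [Set.mem_setOf_eq, map_zero]; exact Q.zero_mem)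
    (fun {p q} hp hq => by
      simp only [Set.mem_setOf_eq, map_add] at *
      exact Q.add_mem hp hq)
    (fun {p} hp => by
      simp only [Set.mem_setOf_eq, map_neg] at *
      exact Q.neg_mem hp)
    (fun {r a} ha => by
      simp only [Set.mem_setOf_eq, map_mul] at *
      exact Q.mul_mem_left _ _ ha)
    (fun {a r} ha => by
      simp only [Set.mem_setOf_eq, map_mul] at *
      exact Q.mul_mem_right _ _ ha)
  have hQAmem : ∀ a : A, a ∈ QA ↔ (φ a : Ax) ∈ Q :=
    fun a => TwoSidedIdeal.mem_mk' _ _ _ _ _ _ a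
  have hspan : ∀ y : A, (y ∈ TwoSidedIdeal.span {x} ↔ ∃ a, y = x * a) := mem_span_normal hxn
  have hxmem : ∀ b : A, b ∈ TwoSidedIdeal.span {x} → ∃ s, b = s * x := by
    intro b hb
    obtain ⟨a, ha⟩ := (hspan b).mp hb
    exact (Set.ext_iff.mp hxn b).mp ⟨a, ha⟩
  have hcnotx : c ∉ TwoSidedIdeal.span {x} := by
    intro h
    obtain ⟨s, hs⟩ := (hspan c).mp h
    exact hcx s hs
  -- right strip lemma
  have hSL : ∀ (m : ℕ) (y b : A), y * x ^ m = c * b → ∃ b', y = c * b' := by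
    intro m
    induction m with
    | zero => intro y b h; exact ⟨b, by simpa using h⟩
    | succ m ih =>
      intro y b h
      have hcb : c * b ∈ TwoSidedIdeal.span {x} := by
        refine (hspan _).mpr ?_
        have h2 : c * b = (y * x ^ m) * x := by rw [← h, pow_succ, mul_assoc]
        obtain ⟨t, ht⟩ := (Set.ext_iff.mp hxn (c * b)).mpr ⟨y * x ^ m, h2⟩
        exact ⟨t, ht⟩
      rcases hxcp.2 c b hcb with h1 | h1
      · exact absurd h1 hcnotx
      · obtain ⟨s, hs⟩ := hxmem b h1
        have h3 : (y * x ^ m) * x = (c * s) * x := by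
          calc (y * x ^ m) * x = y * x ^ (m + 1) := by rw [mul_assoc, ← pow_succ]
            _ = c * (s * x) := by rw [h, hs]
            _ = (c * s) * x := by rw [mul_assoc]
        have h4 : y * x ^ m = c * s := by
          have h5 : (y * x ^ m - c * s) * x = 0 := by rw [sub_mul, h3, sub_self]
          exact sub_eq_zero.mp (xreg_r hPrime hx0 hxn h5)
        exact ih y s h4
  -- left strip lemma
  have hSL' : ∀ (m : ℕ) (e d : A), e * c = x ^ m * (c * d) → ∃ a, a * c = c * d := by
    intro m
    induction m with
    | zero => intro e d h; exact ⟨e, by simpa using h⟩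
    | succ m ih =>
      intro e d h
      have hec : e * c ∈ TwoSidedIdeal.span {x} :=
        (hspan _).mpr ⟨x ^ m * (c * d), by rw [h, pow_succ', mul_assoc]⟩
      rcases hxcp.2 e c hec with h1 | h1
      · obtain ⟨e₁, he₁⟩ := (hspan e).mp h1
        have h2 : x * (e₁ * c) = x * (x ^ m * (c * d)) := by
          rw [← mul_assoc, ← he₁, h, pow_succ', mul_assoc]
        have h3 : e₁ * c = x ^ m * (c * d) := by
          have h4 : x * (e₁ * c - x ^ m * (c * d)) = 0 := by rw [mul_sub, h2, sub_self]
          exact sub_eq_zero.mp (xreg_l hPrime hx0 hxn h4)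
        exact ih e₁ d h3
      · exact absurd h1 hcnotx
  have hcQ : (φ c : Ax) ∈ Q := (humem _).mpr ⟨(φ x : Ax) ^ n, hcu⟩
  -- membership characterization of QA
  have hmemchar : ∀ y : A, y ∈ QA ↔ ∃ a, y = c * a := by
    intro y
    rw [hQAmem]
    constructor
    · intro hy
      obtain ⟨s, hs⟩ := (humem _).mp hy
      obtain ⟨b, k, hbk⟩ := frac_right hxn s
      obtain ⟨b', hb'c, hb'⟩ := comm_pow_phi hxn b n
      have key : (φ (y * x ^ (k + n)) : Ax) = φ (c * b') := by
        calc (φ (y * x ^ (k + n)) : Ax) = φ y * ((φ x) ^ k * (φ x) ^ n) := by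
              rw [map_mul, map_pow, pow_add]
          _ = (u * (s * (φ x : Ax) ^ k)) * (φ x) ^ n := by
              rw [hs, ← mul_assoc, mul_assoc u s]
          _ = (u * φ b) * (φ x : Ax) ^ n := by rw [hbk]
          _ = u * ((φ b : Ax) * (φ x) ^ n) := by rw [mul_assoc]
          _ = u * ((φ x : Ax) ^ n * φ b') := by rw [hb'c]
          _ = (u * (φ x : Ax) ^ n) * φ b' := by rw [mul_assoc]
          _ = φ (c * b') := by rw [← hcu, ← map_mul]
      have h2 : y * x ^ (k + n) = c * b' := phi_inj hPrime hx0 hxn key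
      exact hSL (k + n) y b' h2
    · rintro ⟨a, rfl⟩
      refine (humem _).mpr ⟨(φ x : Ax) ^ n * φ a, ?_⟩
      rw [map_mul, hcu, mul_assoc]
  -- normality of c
  have hnormc : IsNormalElem c := by
    apply Set.ext
    intro y
    constructor
    · rintro ⟨a, rfl⟩
      obtain ⟨d, hd⟩ := conj_pow_right hxn a n
      obtain ⟨s, hs⟩ := (Set.ext_iff.mp hun (u * φ d)).mp ⟨φ d, rfl⟩
      obtain ⟨e, m, hem⟩ := frac_left (x := x) s
      have hdphi : (φ x : Ax) ^ n * φ a = φ d * (φ x) ^ n := by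
        rw [← map_pow, ← map_mul, hd, map_mul, map_pow]
      have key : (φ (e * c) : Ax) = φ (x ^ m * (c * a)) := by
        calc (φ (e * c) : Ax) = φ e * φ c := by rw [map_mul]
          _ = ((φ x : Ax) ^ m * s) * (u * (φ x) ^ n) := by rw [hem, hcu]
          _ = (φ x : Ax) ^ m * ((s * u) * (φ x) ^ n) := by
              rw [mul_assoc, ← mul_assoc s u]
          _ = (φ x : Ax) ^ m * ((u * φ d) * (φ x) ^ n) := by rw [← hs]
          _ = (φ x : Ax) ^ m * (u * ((φ d : Ax) * (φ x) ^ n)) := by rw [mul_assoc u]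
          _ = (φ x : Ax) ^ m * (u * ((φ x : Ax) ^ n * φ a)) := by
              rw [hdphi]
          _ = (φ x : Ax) ^ m * ((u * (φ x : Ax) ^ n) * φ a) := by rw [mul_assoc u]
          _ = (φ x : Ax) ^ m * ((φ c : Ax) * φ a) := by rw [hcu]
          _ = φ (x ^ m * (c * a)) := by rw [map_mul, map_mul, map_pow]
      have h2 : e * c = x ^ m * (c * a) := phi_inj hPrime hx0 hxn key
      obtain ⟨b, hb⟩ := hSL' m e a h2
      exact ⟨b, hb.symm⟩
    · rintro ⟨a, rfl⟩
      have h1 : a * c ∈ QA := (hQAmem _).mpr (by rw [map_mul]; exact Q.mul_mem_left _ _ hcQ)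
      exact (hmemchar _).mp h1
  refine ⟨QA, ?_, ⟨?_, ?_⟩, ⟨c, hnormc, hmemchar⟩, ?_⟩
  · -- QA ≠ ⊥
    intro h
    have h1 : c ∈ QA := (hmemchar c).mpr ⟨1, (mul_one c).symm⟩
    rw [h, TwoSidedIdeal.mem_bot] at h1
    exact hc0 h1
  · -- QA ≠ ⊤
    intro h
    have h1 : (1 : A) ∈ QA := h ▸ TwoSidedIdeal.mem_top _
    rw [hQAmem, map_one] at h1
    exact hQprime.1 (TwoSidedIdeal.eq_top _ h1)
  · -- primality
    intro a b H
    let T : Ideal A :=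
      { carrier := {β : A | ∀ ρ : A, (φ (a * ρ * β) : Ax) ∈ Q}
        add_mem' := fun {p q} hp hq ρ => by
          rw [show a * ρ * (p + q) = a * ρ * p + a * ρ * q by rw [mul_add], map_add]
          exact Q.add_mem (hp ρ) (hq ρ)
        zero_mem' := fun ρ => by
          rw [mul_zero, map_zero]
          exact Q.zero_mem
        smul_mem' := fun r {β} hβ ρ => by
          rw [smul_eq_mul, show a * ρ * (r * β) = a * (ρ * r) * β by
            rw [mul_assoc, mul_assoc, mul_assoc]]
          exact hβ (ρ * r) }
    have hTmem : ∀ β : A, β ∈ T ↔ ∀ ρ : A, (φ (a * ρ * β) : Ax) ∈ Q := fun _ => Iff.rfl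
    have hTsat : ∀ β : A, β * x ∈ T → β ∈ T := by
      intro β hβ ρ
      have h1 := hβ ρ
      rw [show a * ρ * (β * x) = (a * ρ * β) * x by simp only [mul_assoc], map_mul] at h1
      obtain ⟨z1, hz11, hz12⟩ := pow_inverse (x := x) 1
      rw [pow_one] at hz11 hz12
      have h2 : ((φ (a * ρ * β) : Ax) * (φ x)) * z1 = φ (a * ρ * β) := by
        rw [mul_assoc (φ (a * ρ * β) : Ax), hz12, mul_one]
      rw [← h2]
      exact Q.mul_mem_right _ _ h1
    have hTxr : ∀ β : A, β ∈ T → β * x ∈ T := by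
      intro β hβ ρ
      rw [show a * ρ * (β * x) = (a * ρ * β) * x by simp only [mul_assoc], map_mul]
      exact Q.mul_mem_right _ _ (hβ ρ)
    have hbT : b ∈ T := fun ρ => (hQAmem _).mp (H ρ)
    have Kstar : ∀ s : Ax, (φ a : Ax) * s * (φ b) ∈ Q := by
      intro s
      obtain ⟨r, m, hrm⟩ := frac_right hxn s
      obtain ⟨zm, hzm1, hzm2⟩ := pow_inverse (x := x) m
      obtain ⟨t, htm, htT⟩ := tau_chain hNoeth hPrime hx0 hxn T hTsat hTxr hbT m
      have key : ((φ a : Ax) * s * (φ b)) * (φ x) ^ m = φ (a * r * t) := by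
        calc ((φ a : Ax) * s * (φ b)) * (φ x) ^ m
            = (φ a : Ax) * s * ((φ b) * (φ x) ^ m) := by rw [mul_assoc]
          _ = (φ a : Ax) * s * φ (b * x ^ m) := by rw [map_mul, map_pow]
          _ = (φ a : Ax) * s * φ (x ^ m * t) := by rw [htm]
          _ = (φ a : Ax) * s * ((φ x) ^ m * φ t) := by rw [map_mul, map_pow]
          _ = (φ a : Ax) * (s * (φ x) ^ m) * φ t := by
              rw [mul_assoc (φ a : Ax), ← mul_assoc s, ← mul_assoc (φ a : Ax)]
          _ = (φ a : Ax) * φ r * φ t := by rw [hrm]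
          _ = φ (a * r * t) := by rw [map_mul, map_mul]
      have hin : ((φ a : Ax) * s * (φ b)) * (φ x) ^ m ∈ Q := by
        rw [key]
        exact htT r
      have h2 : (φ a : Ax) * s * (φ b) = (((φ a : Ax) * s * (φ b)) * (φ x) ^ m) * zm := by
        rw [mul_assoc ((φ a : Ax) * s * (φ b)), hzm2, mul_one]
      rw [h2]
      exact Q.mul_mem_right _ _ hin
    rcases hQprime.2 (φ a) (φ b) Kstar with h | h
    · exact Or.inl ((hQAmem a).mpr h)
    · exact Or.inr ((hQAmem b).mpr h)
  · -- QA ≤ P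
    intro a ha
    exact (ext_contract hPrime hx0 hxn hP hxP hE a).mp (hQE ((hQAmem a).mp ha))

end Main

end NagataAux

open OreLocalization in
/-- Nagata's lemma, part (ii): if the localisation `A_x` of `A` at the powers of a
nonzero non-unit normal element `x` generating a completely prime ideal is a noetherian
UFR, then so is `A`. -/
theorem nagata_part_ii {A : Type*} [Ring A]
    (hNoeth : IsNoetherianRing A) (hPrime : IsPrimeRing A)
    (x : A) (hx0 : x ≠ 0) (hxu : ¬ IsUnit x) (hxn : IsNormalElem x)
    (hxcp : (TwoSidedIdeal.span {x}).IsCompletelyPrime)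
    [OreSet (Submonoid.powers x)]
    (hloc : IsNoethUFR (A[(Submonoid.powers x)⁻¹])) :
    IsNoethUFR A := by
  refine ⟨hPrime, hNoeth, fun P hP hPbot => ?_⟩
  by_cases hxP : x ∈ P
  · refine ⟨TwoSidedIdeal.span {x}, ?_,
      ⟨hxcp.1, fun a b H => hxcp.2 a b (by simpa using H 1)⟩,
      ⟨x, hxn, NagataAux.mem_span_normal hxn⟩, ?_⟩
    · intro h
      have hx : x ∈ TwoSidedIdeal.span {x} := TwoSidedIdeal.subset_span rfl
      rw [h, TwoSidedIdeal.mem_bot] at hx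
      exact hx0 hx
    · intro y hy
      obtain ⟨a, rfl⟩ := (NagataAux.mem_span_normal hxn y).mp hy
      exact P.mul_mem_right _ _ hxP
  · exact NagataAux.hard_case hPrime hx0 hxn hP hxP hNoeth hxu hxcp hloc hPbot
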